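/- If φ*(N) divides N, a is a prime, k ≥ 1, and a^k exactly divides N, then k divides N. -/

import Mathlib

open Finset

/-- Geometric sum identity in ℕ. -/
private lemma natGeom (x n : ℕ) (hx : 1 ≤ x) :
    (x - 1) * ∑ i ∈ range n, x ^ i = x ^ n - 1 := by
  have h1 : (1 : ℕ) ≤ x ^ n := Nat.one_le_pow _ _ hx
  have h := geom_sum_mul (x : ℤ) n
  zify [hx, h1]
  linarith [h]

private lemma two_pow_big : ∀ n : ℕ, 2 ≤ n → n + 2 ≤ 2 ^ n := by
  intro n
  induction n with
  | zero => omega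
  | succ m ih =>
    intro h
    rcases Nat.lt_or_ge m 2 with hm | hm
    · interval_cases m <;> simp_all
    · have := ih hm
      have h2 : 2 ^ (m + 1) = 2 * 2 ^ m := by ring
      omega

private lemma dvd_pow_sub_one_iff {q a n : ℕ} (ha : 1 ≤ a) :
    q ∣ a ^ n - 1 ↔ (a : ZMod q) ^ n = 1 := by
  have h1 : (1 : ℕ) ≤ a ^ n := Nat.one_le_pow _ _ ha
  rw [← ZMod.natCast_eq_zero_iff, Nat.cast_sub h1]
  push_cast
  rw [sub_eq_zero]

private lemma cast_ne_zero_of_dvd {q a n : ℕ} (hq : q.Prime) (hn : n ≠ 0)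
    (ha : 1 ≤ a) (h : q ∣ a ^ n - 1) : (a : ZMod q) ≠ 0 := by
  intro h0
  have hqa : q ∣ a := (ZMod.natCast_eq_zero_iff a q).mp h0
  have h1 : (1 : ℕ) ≤ a ^ n := Nat.one_le_pow _ _ ha
  have hqan : q ∣ a ^ n := dvd_pow hqa hn
  have : q ∣ a ^ n - (a ^ n - 1) := Nat.dvd_sub hqan h
  rw [Nat.sub_sub_self h1] at this
  have := Nat.le_of_dvd one_pos this
  have := hq.two_le
  omega

private lemma dvd_div_of_not_pow_dvd {p k d : ℕ} (hp : p.Prime) (hk : k ≠ 0) (hpk : p ∣ k)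
    (hd : d ∣ k) (hnd : ¬ p ^ k.factorization p ∣ d) : d ∣ k / p := by
  have hd0 : d ≠ 0 := by rintro rfl; exact hk (zero_dvd_iff.mp hd)
  have hm0 : k / p ≠ 0 := by
    have := Nat.div_pos (Nat.le_of_dvd (Nat.pos_of_ne_zero hk) hpk) hp.pos
    omega
  rw [← Nat.factorization_le_iff_dvd hd0 hm0]
  rw [Finsupp.le_def]
  intro r
  rw [Nat.factorization_div hpk]
  simp only [Finsupp.coe_tsub, Pi.sub_apply]
  have hdk : d.factorization r ≤ k.factorization r :=
    Finsupp.le_def.mp ((Nat.factorization_le_iff_dvd hd0 hk).mpr hd) r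
  rcases eq_or_ne r p with rfl | hrp
  · have hlt : d.factorization r < k.factorization r := by
      by_contra hc
      exact hnd ((Nat.Prime.pow_dvd_iff_le_factorization hp hd0).mpr (by omega))
    have hps : r.factorization r = 1 := Nat.Prime.factorization_self hp
    omega
  · have : (p : ℕ).factorization r = 0 := by
      rw [Nat.Prime.factorization hp]
      simp [Finsupp.single_apply, (Ne.symm hrp)]
    omega

/-- Key lemma: if `p ∣ k`, `p` prime, `a ≥ 2`, and `(p,k) ≠ (2,2)`, then `a^k - 1`
has a prime factor `q` with `p ^ (k.factorization p) ∣ q - 1`. -/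
private lemma key {a k p : ℕ} (ha : 2 ≤ a) (hp : p.Prime) (hk : k ≠ 0) (hpk : p ∣ k)
    (hne : ¬(p = 2 ∧ k = 2)) :
    ∃ q, q.Prime ∧ q ∣ a ^ k - 1 ∧ p ^ k.factorization p ∣ q - 1 := by
  have ha1 : 1 ≤ a := by omega
  set m := k / p with hm
  have hkm : p * m = k := Nat.mul_div_cancel' hpk
  have hm0 : m ≠ 0 := by rintro h; rw [h, mul_zero] at hkm; exact hk hkm.symm
  have hm1 : 1 ≤ a ^ m := Nat.one_le_pow _ _ ha1
  have hak1 : 1 ≤ a ^ k := Nat.one_le_pow _ _ ha1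
  rcases eq_or_ne p 2 with rfl | hodd
  · -- p = 2
    have hm2 : 2 ≤ m := by
      rcases Nat.lt_or_ge m 2 with h | h
      · exfalso; interval_cases m <;> omega
      · exact h
    -- find an odd prime factor of a^m + 1
    obtain ⟨q, hq, hq2, hqd⟩ : ∃ q, q.Prime ∧ q ≠ 2 ∧ q ∣ a ^ m + 1 := by
      by_contra hcon
      push_neg at hcon
      have huniq : ∀ {d : ℕ}, d.Prime → d ∣ a ^ m + 1 → d = 2 := by
        intro d hd hdd
        by_contra hd2
        exact (hcon d hd hd2) hdd
      have h2t := Nat.eq_prime_pow_of_unique_prime_dvd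
        (show a ^ m + 1 ≠ 0 by omega) huniq
      set t := (a ^ m + 1).primeFactorsList.length with htdef
      have hbig : 5 ≤ a ^ m + 1 := by
        have : 2 ^ 2 ≤ a ^ m := by
          calc 2 ^ 2 ≤ a ^ 2 := Nat.pow_le_pow_left ha 2
          _ ≤ a ^ m := Nat.pow_le_pow_right ha1 hm2
        omega
      have ht2 : 2 ≤ t := by
        by_contra hcont
        interval_cases t <;> omega
      have h4 : 4 ∣ a ^ m + 1 := by
        rw [h2t]
        exact (show (4:ℕ) = 2 ^ 2 by norm_num) ▸ pow_dvd_pow 2 ht2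
      -- a must be odd
      have haodd : a % 2 = 1 := by
        rcases Nat.even_or_odd a with he | ho
        · exfalso
          have hdp : 2 ∣ a ^ m := dvd_pow (even_iff_two_dvd.mp he) (by omega)
          omega
        · exact Nat.odd_iff.mp ho
      -- a odd implies a^2 ≡ 1 mod 8, handle parity of m
      rcases Nat.even_or_odd m with hme | hmo
      · -- m even : a^m ≡ 1 mod 4, contradiction with 4 ∣ a^m + 1
        obtain ⟨u, hu⟩ := hme
        have hsq : ∀ b : ℕ, b % 2 = 1 → b ^ 2 % 4 = 1 := by
          intro b hb
          obtain ⟨c, hc⟩ : ∃ c, b = 2 * c + 1 := ⟨b / 2, by omega⟩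
          subst hc; ring_nf; omega
        have : a ^ m % 4 = 1 := by
          have : a ^ m = (a ^ u) ^ 2 := by rw [← pow_mul]; congr 1; omega
          rw [this]
          exact hsq _ (Nat.odd_iff.mp ((Nat.odd_iff.mpr haodd).pow))
        omega
      · -- m odd ≥ 3 : a + 1 ∣ a^m + 1, a+1 = 2^s, and 2-adic valuation argument
        have hdvd1 : (a + 1 : ℕ) ∣ a ^ m + 1 := by
          have hz : ((a : ℤ) + 1) ∣ (a : ℤ) ^ m + 1 := by
            have := sub_dvd_pow_sub_pow (a : ℤ) (-1) m
            rw [Odd.neg_one_pow (by exact_mod_cast hmo)] at this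
            simpa [sub_neg_eq_add] using this
          exact_mod_cast hz
        obtain ⟨s, hs, hsa⟩ := (Nat.dvd_prime_pow Nat.prime_two).mp (h2t ▸ hdvd1)
        have hs2 : 2 ≤ s := by
          have : 4 ≤ a + 1 := by omega
          rw [hsa] at this
          by_contra hcc
          interval_cases s <;> omega
        -- 2^(s+1) ∣ a^2 - 1
        have h2s1 : 2 ^ (s + 1) ∣ a ^ 2 - 1 := by
          have hfac : a ^ 2 - 1 = (a + 1) * (a - 1) := by
            have : a ^ 2 = a * a := sq a
            rw [this]; cases a with
            | zero => omega
            | succ b => simp [Nat.succ_sub_one]; ring_nf; omega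
          rw [hfac, hsa]
          have : (2 : ℕ) ∣ a - 1 := by omega
          obtain ⟨v, hv⟩ := this
          rw [hv, pow_succ]
          exact mul_dvd_mul_left _ (Dvd.intro v rfl)
        -- a^2 - 1 ∣ a^(m-1) - 1 since 2 ∣ m - 1
        have hm1' : a ^ 2 - 1 ∣ a ^ (m - 1) - 1 := by
          obtain ⟨w, hw⟩ := hmo
          have : m - 1 = 2 * w := by omega
          rw [this, pow_mul]
          simpa using Nat.sub_dvd_pow_sub_pow (a ^ 2) 1 w
        have hma : 2 ^ (s + 1) ∣ a ^ m - a := by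
          have hmm : a * (a ^ (m - 1) - 1) = a ^ m - a := by
            rw [Nat.mul_sub, mul_one]
            congr 1
            rw [← pow_succ']
            congr 1
            omega
          rw [← hmm]
          exact Dvd.dvd.mul_left (h2s1.trans hm1') a
        have hts : s + 1 ≤ t := by
          by_contra hcc
          have hle : t ≤ s := by omega
          have : (2:ℕ) ^ t ≤ 2 ^ s := Nat.pow_le_pow_right (by norm_num) hle
          rw [← h2t, ← hsa] at this
          have hstrict : a + 1 < a ^ m + 1 := by
            have : a < a ^ m := by
              calc a = a ^ 1 := (pow_one a).symm
              _ < a ^ m := Nat.pow_lt_pow_right (by omega) (by omega)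
            omega
          omega
        have h2s1' : 2 ^ (s + 1) ∣ a ^ m + 1 := by
          rw [h2t]
          exact pow_dvd_pow 2 hts
        have : 2 ^ (s + 1) ∣ a + 1 := by
          have h := Nat.dvd_sub h2s1' hma
          have heq : a ^ m + 1 - (a ^ m - a) = a + 1 := by
            have : a ≤ a ^ m := Nat.le_self_pow (by omega) a
            omega
          rwa [heq] at h
        rw [hsa] at this
        have := Nat.le_of_dvd (by positivity) this
        have : (2:ℕ) ^ s < 2 ^ (s + 1) := Nat.pow_lt_pow_right (by norm_num) (by omega)
        omega
    -- now use q
    have hqk : q ∣ a ^ k - 1 := by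
      have hfac : (a ^ m - 1) * (a ^ m + 1) = a ^ k - 1 := by
        have hk2 : a ^ k = (a ^ m) ^ 2 := by rw [← pow_mul]; congr 1; omega
        rw [hk2]
        zify [hm1, Nat.one_le_pow _ _ hm1]
        ring
      rw [← hfac]
      exact Dvd.dvd.mul_left hqd _
    haveI : Fact q.Prime := ⟨hq⟩
    have haq : (a : ZMod q) ≠ 0 := cast_ne_zero_of_dvd hq hk ha1 hqk
    have hdk : orderOf (a : ZMod q) ∣ k :=
      orderOf_dvd_iff_pow_eq_one.mpr ((dvd_pow_sub_one_iff ha1).mp hqk)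
    have hdm : ¬ orderOf (a : ZMod q) ∣ m := by
      intro hdm
      have h1 : (a : ZMod q) ^ m = 1 := orderOf_dvd_iff_pow_eq_one.mp hdm
      have h0 : ((a ^ m + 1 : ℕ) : ZMod q) = 0 :=
        (ZMod.natCast_eq_zero_iff _ q).mpr hqd
      push_cast at h0
      rw [h1] at h0
      have h2 : ((2 : ℕ) : ZMod q) = 0 := by push_cast; linear_combination h0
      have := (ZMod.natCast_eq_zero_iff 2 q).mp h2
      exact hq2 ((Nat.prime_dvd_prime_iff_eq hq Nat.prime_two).mp this)
    have h2j : 2 ^ k.factorization 2 ∣ orderOf (a : ZMod q) := by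
      by_contra hno
      exact hdm (dvd_div_of_not_pow_dvd Nat.prime_two hk hpk hdk hno)
    exact ⟨q, hq, hqk, h2j.trans (orderOf_dvd_iff_pow_eq_one.mpr
      (ZMod.pow_card_sub_one_eq_one haq))⟩
  · -- p odd
    have hp3 : 3 ≤ p := by
      rcases hp.eq_two_or_odd' with h | h
      · exact absurd h hodd
      · have := hp.two_le; omega
    by_contra hcon
    push_neg at hcon
    set S := ∑ i ∈ range p, (a ^ m) ^ i with hS
    have hgeom : (a ^ m - 1) * S = a ^ k - 1 := by
      rw [hS, natGeom _ _ hm1, ← pow_mul, mul_comm m p, hkm]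
    have hSd : S ∣ a ^ k - 1 := Dvd.intro_left _ hgeom
    have hstepA : ∀ q : ℕ, q.Prime → q ∣ a ^ k - 1 → q ∣ a ^ m - 1 := by
      intro q hq hqk
      haveI : Fact q.Prime := ⟨hq⟩
      have haq : (a : ZMod q) ≠ 0 := cast_ne_zero_of_dvd hq hk ha1 hqk
      have hdk : orderOf (a : ZMod q) ∣ k :=
        orderOf_dvd_iff_pow_eq_one.mpr ((dvd_pow_sub_one_iff ha1).mp hqk)
      have hdq : orderOf (a : ZMod q) ∣ q - 1 :=
        orderOf_dvd_iff_pow_eq_one.mpr (ZMod.pow_card_sub_one_eq_one haq)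
      have hnp : ¬ p ^ k.factorization p ∣ orderOf (a : ZMod q) :=
        fun h => hcon q hq hqk (h.trans hdq)
      have hdm : orderOf (a : ZMod q) ∣ m :=
        dvd_div_of_not_pow_dvd hp hk hpk hdk hnp
      exact (dvd_pow_sub_one_iff ha1).mpr (orderOf_dvd_iff_pow_eq_one.mp hdm)
    -- S > p
    have hSgt : p < S := by
      have hterm : ∀ i ∈ range p, 2 ^ i ≤ (a ^ m) ^ i := fun i _ =>
        Nat.pow_le_pow_left (by
          calc 2 ≤ a := ha
          _ = a ^ 1 := (pow_one a).symm
          _ ≤ a ^ m := Nat.pow_le_pow_right ha1 (Nat.one_le_iff_ne_zero.mpr hm0)) i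
      have hsum : (∑ i ∈ range p, 2 ^ i) ≤ S := Finset.sum_le_sum hterm
      have h2p : ∑ i ∈ range p, 2 ^ i = 2 ^ p - 1 := by
        have := natGeom 2 p (by norm_num)
        simpa using this
      have := two_pow_big p (by omega)
      omega
    have hS0 : S ≠ 0 := by omega
    -- every prime factor of S is p
    have hup : ∀ {d : ℕ}, d.Prime → d ∣ S → d = p := by
      intro d hd hdS
      have hdm' : d ∣ a ^ m - 1 := hstepA d hd (hdS.trans hSd)
      haveI : Fact d.Prime := ⟨hd⟩
      have hx1 : (a : ZMod d) ^ m = 1 := (dvd_pow_sub_one_iff ha1).mp hdm'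
      have hcast : ((S : ℕ) : ZMod d) = ((p : ℕ) : ZMod d) := by
        rw [hS]
        push_cast
        rw [hx1]
        simp
      have hS0' : ((S : ℕ) : ZMod d) = 0 := (ZMod.natCast_eq_zero_iff _ d).mpr hdS
      rw [hS0'] at hcast
      have hdp : d ∣ p := (ZMod.natCast_eq_zero_iff p d).mp hcast.symm
      exact (Nat.prime_dvd_prime_iff_eq hd hp).mp hdp
    have hSpow := Nat.eq_prime_pow_of_unique_prime_dvd hS0 hup
    set t := S.primeFactorsList.length with htdef
    -- p^2 does not divide S
    have hp2 : ¬ p ^ 2 ∣ S := by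
      intro hp2
      have hpS : p ∣ S := dvd_trans (dvd_pow_self p two_ne_zero) hp2
      have hpc : p ∣ a ^ m - 1 := hstepA p hp (hpS.trans hSd)
      set c := a ^ m - 1 with hc
      -- S = p + c * W
      have hterm : ∀ i : ℕ, (a ^ m) ^ i = 1 + c * ∑ j ∈ range i, (a ^ m) ^ j := by
        intro i
        have h2 := natGeom (a ^ m) i hm1
        have h1 : 1 ≤ (a ^ m) ^ i := Nat.one_le_pow _ _ hm1
        rw [← hc] at h2
        set y := c * ∑ j ∈ range i, (a ^ m) ^ j
        omega
      have hSW : S = p + c * ∑ i ∈ range p, ∑ j ∈ range i, (a ^ m) ^ j := by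
        rw [hS]
        rw [Finset.sum_congr rfl (fun i _ => hterm i)]
        rw [Finset.sum_add_distrib, Finset.sum_const, card_range, smul_eq_mul,
          mul_one, ← Finset.mul_sum]
      set W := ∑ i ∈ range p, ∑ j ∈ range i, (a ^ m) ^ j with hW
      have hpW : p ∣ W := by
        haveI : Fact p.Prime := ⟨hp⟩
        have hx1 : (a : ZMod p) ^ m = 1 := (dvd_pow_sub_one_iff ha1).mp hpc
        have hgauss : p ∣ ∑ i ∈ range p, i := by
          have h2 := Finset.sum_range_id_mul_two p
          have hpd : p ∣ (∑ i ∈ range p, i) * 2 := ⟨p - 1, h2⟩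
          rcases (Nat.Prime.dvd_mul hp).mp hpd with h | h
          · exact h
          · exact absurd ((Nat.prime_dvd_prime_iff_eq hp Nat.prime_two).mp h) hodd
        rw [← ZMod.natCast_eq_zero_iff]
        rw [hW]
        push_cast
        rw [hx1]
        simp only [one_pow]
        have : ∀ i ∈ range p, (∑ _j ∈ range i, (1 : ZMod p)) = (i : ZMod p) := by
          intro i _
          simp
        rw [Finset.sum_congr rfl this]
        rw [← Nat.cast_sum]
        exact (ZMod.natCast_eq_zero_iff _ p).mpr hgauss
      have hcw : p ^ 2 ∣ c * W := by
        rw [sq]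
        exact mul_dvd_mul hpc hpW
      have hpp : p ^ 2 ∣ p := by
        have h := Nat.dvd_sub hp2 hcw
        have heq : S - c * W = p := by omega
        rwa [heq] at h
      have := Nat.le_of_dvd hp.pos hpp
      nlinarith [hp.two_le]
    have ht1 : t ≤ 1 := by
      by_contra h'
      push_neg at h'
      exact hp2 (hSpow ▸ pow_dvd_pow p h')
    have hSle : S ≤ p := by
      calc S = p ^ t := hSpow
      _ ≤ p ^ 1 := Nat.pow_le_pow_right hp.pos ht1
      _ = p := pow_one p
    omega

/-- The unitary totient function: φ*(n) = ∏_{p^e || n} (p^e - 1). -/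
def uphi (n : ℕ) : ℕ := ∏ p ∈ n.primeFactors, (p ^ n.factorization p - 1)

theorem stmt6 (N a k : ℕ) (hdvd : uphi N ∣ N) (ha : a.Prime) (hk : 1 ≤ k)
    (h1 : a ^ k ∣ N) (h2 : ¬ a ^ (k + 1) ∣ N) :
    k ∣ N := by
  have hN0 : N ≠ 0 := by rintro rfl; exact h2 (dvd_zero _)
  have ha2 : 2 ≤ a := ha.two_le
  have hk0 : k ≠ 0 := by omega
  have haN : a ∣ N := dvd_trans (dvd_pow_self a hk0) h1
  have hmem : a ∈ N.primeFactors := Nat.mem_primeFactors.mpr ⟨ha, haN, hN0⟩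
  have hfa : N.factorization a = k := by
    have h1' := (Nat.Prime.pow_dvd_iff_le_factorization ha hN0).mp h1
    have h2' : ¬ (k + 1 ≤ N.factorization a) :=
      fun h => h2 ((Nat.Prime.pow_dvd_iff_le_factorization ha hN0).mpr h)
    omega
  have hak : a ^ k - 1 ∣ N := by
    have h3 : a ^ k - 1 ∣ uphi N := by
      rw [← hfa, uphi]
      exact Finset.dvd_prod_of_mem (fun p => p ^ N.factorization p - 1) hmem
    exact h3.trans hdvd
  have chain : ∀ q : ℕ, q.Prime → q ∣ N → q - 1 ∣ N := by
    intro q hq hqN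
    have hqmem : q ∈ N.primeFactors := Nat.mem_primeFactors.mpr ⟨hq, hqN, hN0⟩
    have h1q : q ^ N.factorization q - 1 ∣ N :=
      (Finset.dvd_prod_of_mem (fun p => p ^ N.factorization p - 1) hqmem).trans hdvd
    have h2q : q - 1 ∣ q ^ N.factorization q - 1 := by
      have := Nat.sub_dvd_pow_sub_pow q 1 (N.factorization q)
      simpa using this
    exact h2q.trans h1q
  rw [← Nat.factorization_le_iff_dvd hk0 hN0, Finsupp.le_def]
  intro p
  by_cases hkp : k.factorization p = 0
  · simp [hkp]
  · have hpmem : p ∈ k.primeFactors := by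
      rw [← Nat.support_factorization]
      exact Finsupp.mem_support_iff.mpr hkp
    have hp : p.Prime := Nat.prime_of_mem_primeFactors hpmem
    have hpk : p ∣ k := Nat.dvd_of_mem_primeFactors hpmem
    by_cases hsp : p = 2 ∧ k = 2
    · obtain ⟨rfl, rfl⟩ := hsp
      have h2N : 2 ∣ N := by
        rcases ha.eq_two_or_odd' with rfl | hodd
        · exact haN
        · have hodd2 : Odd (a ^ 2) := hodd.pow
          have : 2 ∣ a ^ 2 - 1 := by
            have := Nat.odd_iff.mp hodd2
            have h4 : 4 ≤ a ^ 2 := by nlinarith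
            omega
          exact this.trans hak
      have hf2 : (2 : ℕ).factorization 2 = 1 := Nat.Prime.factorization_self Nat.prime_two
      rw [hf2]
      have h2N' : 2 ^ 1 ∣ N := by simpa using h2N
      have := (Nat.Prime.pow_dvd_iff_le_factorization Nat.prime_two hN0).mp h2N'
      omega
    · obtain ⟨q, hq, hqdvd, hqj⟩ := key ha2 hp hk0 hpk hsp
      have hqN : q ∣ N := hqdvd.trans hak
      have hq1N : q - 1 ∣ N := chain q hq hqN
      have hpjN : p ^ k.factorization p ∣ N := hqj.trans hq1N
      exact (Nat.Prime.pow_dvd_iff_le_factorization hp hN0).mp hpjN
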